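/- For f ∈ L¹(Q, ℂ^d) with Q of finite positive measure, the convex body average ⟪f⟫_Q = {(1/|Q|)∫_Q φ f dV : ‖φ‖_∞ ≤ 1} is a symmetric, convex, and compact subset of ℂ^d. -/

import Mathlib

open MeasureTheory

open Complex ENNReal NNReal

section AuxLemmas

lemma norm_le_one_of_rat_re (z : ℂ) (h : ∀ q : ℚ, (Complex.exp (q * Complex.I) * z).re ≤ 1) :
    ‖z‖ ≤ 1 := by
  by_contra hc
  push_neg at hc
  set r : ℝ := ‖z‖ with hr
  have hr1 : 1 < r := by exact hc
  have hrpos : (0:ℝ) < r := lt_trans one_pos hr1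
  set θ : ℝ := -z.arg with hθdef
  have hθ : Complex.exp (↑θ * Complex.I) * z = (r : ℂ) := by
    conv_lhs => rw [← Complex.norm_mul_exp_arg_mul_I z]
    calc Complex.exp (↑θ * Complex.I) * ((‖z‖ : ℂ) * Complex.exp (z.arg * Complex.I))
        = (‖z‖ : ℂ) * Complex.exp (↑θ * Complex.I + z.arg * Complex.I) := by
          rw [Complex.exp_add]; ring
      _ = (r : ℂ) := by
          rw [hθdef]
          push_cast
          rw [show (-(z.arg:ℂ)) * Complex.I + (z.arg:ℂ) * Complex.I = 0 by ring,
            Complex.exp_zero, mul_one, hr]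
  have hεpos : (0:ℝ) < min 1 ((r - 1) / (2 * r)) := by
    apply lt_min one_pos
    apply div_pos <;> linarith
  obtain ⟨q, hq⟩ := exists_rat_near θ hεpos
  have hq1 : |θ - (q:ℝ)| ≤ 1 := le_of_lt (lt_of_lt_of_le hq (min_le_left _ _))
  have hq2 : |θ - (q:ℝ)| < (r - 1) / (2 * r) := lt_of_lt_of_le hq (min_le_right _ _)
  have hdiff : ‖Complex.exp (↑(q:ℝ) * Complex.I) - Complex.exp (↑θ * Complex.I)‖
      ≤ 2 * |(q:ℝ) - θ| := by
    have e1 : Complex.exp (↑(q:ℝ) * Complex.I) - Complex.exp (↑θ * Complex.I)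
        = Complex.exp (↑θ * Complex.I) * (Complex.exp (↑((q:ℝ) - θ) * Complex.I) - 1) := by
      rw [mul_sub, ← Complex.exp_add, mul_one]
      push_cast
      ring_nf
    rw [e1, norm_mul, Complex.norm_exp_ofReal_mul_I, one_mul]
    have h2 : ‖(↑((q:ℝ) - θ) * Complex.I)‖ = |(q:ℝ) - θ| := by
      rw [norm_mul, Complex.norm_I, Complex.norm_real, Real.norm_eq_abs, mul_one]
    have h3 : ‖(↑((q:ℝ) - θ) * Complex.I)‖ ≤ 1 := by
      rw [h2, abs_sub_comm]; exact hq1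
    calc ‖Complex.exp (↑((q:ℝ) - θ) * Complex.I) - 1‖
        ≤ 2 * ‖(↑((q:ℝ) - θ) * Complex.I)‖ := Complex.norm_exp_sub_one_le h3
      _ = 2 * |(q:ℝ) - θ| := by rw [h2]
  have hkey : (Complex.exp (↑(q:ℝ) * Complex.I) * z).re > 1 := by
    have e2 : Complex.exp (↑(q:ℝ) * Complex.I) * z
        = (Complex.exp (↑(q:ℝ) * Complex.I) - Complex.exp (↑θ * Complex.I)) * z + (r:ℂ) := by
      rw [sub_mul, hθ]; ring
    have h4 : ((Complex.exp (↑(q:ℝ) * Complex.I) - Complex.exp (↑θ * Complex.I)) * z).re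
        ≥ -(2 * |(q:ℝ) - θ| * r) := by
      have h5 : |((Complex.exp (↑(q:ℝ) * Complex.I) - Complex.exp (↑θ * Complex.I)) * z).re|
          ≤ 2 * |(q:ℝ) - θ| * r := by
        calc |((Complex.exp (↑(q:ℝ) * Complex.I) - Complex.exp (↑θ * Complex.I)) * z).re|
            ≤ ‖(Complex.exp (↑(q:ℝ) * Complex.I) - Complex.exp (↑θ * Complex.I)) * z‖ :=
              Complex.abs_re_le_norm _
          _ = ‖Complex.exp (↑(q:ℝ) * Complex.I) - Complex.exp (↑θ * Complex.I)‖ * r := by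
              rw [norm_mul, hr]
          _ ≤ 2 * |(q:ℝ) - θ| * r := by
              apply mul_le_mul_of_nonneg_right hdiff (le_of_lt hrpos)
      linarith [abs_le.mp h5]
    have h6 : 2 * |(q:ℝ) - θ| * r < r - 1 := by
      rw [abs_sub_comm] at hq2
      have h7 := (lt_div_iff₀ (by positivity : (0:ℝ) < 2 * r)).mp hq2
      have h8 : 2 * |(q:ℝ) - θ| * r = |(q:ℝ) - θ| * (2 * r) := by ring
      linarith
    rw [e2, Complex.add_re, Complex.ofReal_re]
    linarith
  have := h q
  rw [show ((q:ℚ):ℂ) = ((q:ℝ):ℂ) by push_cast; ring] at this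
  linarith

lemma ae_norm_le_one_of_setIntegral {α : Type*} [MeasurableSpace α] (ν : Measure α)
    [IsFiniteMeasure ν] {G : α → ℂ} (hGi : Integrable G ν)
    (hA : ∀ A : Set α, MeasurableSet A → ‖∫ x in A, G x ∂ν‖ ≤ (ν A).toReal) :
    ∀ᵐ x ∂ν, ‖G x‖ ≤ 1 := by
  have h1 : ∀ q : ℚ, ∀ᵐ x ∂ν, (Complex.exp (q * Complex.I) * G x).re ≤ 1 := by
    intro q
    have hInt : Integrable (fun x => Complex.exp (q * Complex.I) * G x) ν := hGi.const_mul _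
    have h2 := ae_le_of_forall_setIntegral_le (μ := ν)
      (f := fun x => (Complex.exp (q * Complex.I) * G x).re) (g := fun _ => (1:ℝ))
      (Complex.reCLM.integrable_comp hInt) (integrable_const 1) ?_
    · exact h2
    · intro s hs _
      have e1 : ∫ x in s, (Complex.exp (q * Complex.I) * G x).re ∂ν
          = (Complex.exp (q * Complex.I) * ∫ x in s, G x ∂ν).re := by
        rw [← integral_const_mul]
        exact (Complex.reCLM.integral_comp_comm hInt.integrableOn)
      rw [e1, integral_const, smul_eq_mul, mul_one, measureReal_restrict_apply_univ]
      calc (Complex.exp (q * Complex.I) * ∫ x in s, G x ∂ν).re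
          ≤ ‖Complex.exp (q * Complex.I) * ∫ x in s, G x ∂ν‖ := Complex.re_le_norm _
        _ = ‖∫ x in s, G x ∂ν‖ := by
            rw [norm_mul, show (q:ℂ) * Complex.I = ((q:ℝ):ℂ) * Complex.I by push_cast; ring,
              Complex.norm_exp_ofReal_mul_I, one_mul]
        _ ≤ (ν s).toReal := by exact hA s hs
  have h3 : ∀ᵐ x ∂ν, ∀ q : ℚ, (Complex.exp (q * Complex.I) * G x).re ≤ 1 :=
    (ae_all_iff).mpr h1
  exact h3.mono fun x hx => norm_le_one_of_rat_re _ hx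


end AuxLemmas

/-- The convex body average `⟪f⟫_Q`: the set of vectors `⟨φ f⟩_Q = (1/|Q|)∫_Q φ f dV` where
`φ` ranges over measurable complex-valued functions with `‖φ‖_∞ ≤ 1`. -/
def convexBodyAvg {d : ℕ} {α : Type*} [MeasurableSpace α] (μ : Measure α) (Q : Set α)
    (f : α → Fin d → ℂ) : Set (Fin d → ℂ) :=
  {v | ∃ φ : α → ℂ, Measurable φ ∧ (∀ x, ‖φ x‖ ≤ 1) ∧
    ∀ j, v j = ((μ Q).toReal⁻¹ : ℂ) * ∫ x in Q, φ x * f x j ∂μ}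

/-- For `f ∈ L¹(Q, ℂ^d)` (with `Q` of finite positive measure), the convex body
average `⟪f⟫_Q` is symmetric (stable under multiplication by complex scalars of modulus `≤ 1`),
convex, and compact in `ℂ^d`. -/
theorem stmt6 {d : ℕ} {α : Type*} [MeasurableSpace α] (μ : Measure α)
    (Q : Set α) (hQm : MeasurableSet Q) (hQpos : 0 < μ Q) (hQfin : μ Q < ⊤)
    (f : α → Fin d → ℂ) (hf : ∀ j, IntegrableOn (fun x => f x j) Q μ) :
    (∀ lam : ℂ, ‖lam‖ ≤ 1 → ∀ v ∈ convexBodyAvg μ Q f, lam • v ∈ convexBodyAvg μ Q f) ∧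
    Convex ℝ (convexBodyAvg μ Q f) ∧ IsCompact (convexBodyAvg μ Q f) := by
  set c : ℂ := ((μ Q).toReal⁻¹ : ℂ) with hc
  -- integrability of products
  have hi : ∀ (φ : α → ℂ), Measurable φ → (∀ x, ‖φ x‖ ≤ 1) →
      ∀ j, IntegrableOn (fun x => φ x * f x j) Q μ := by
    intro φ hm hb j
    exact (hf j).bdd_mul (hm.aestronglyMeasurable) (ae_of_all _ hb)
  refine ⟨?_, ?_, ?_⟩
  · -- symmetry
    rintro lam hlam v ⟨φ, hφm, hφb, hφv⟩
    refine ⟨fun x => lam * φ x, hφm.const_mul lam, ?_, ?_⟩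
    · intro x
      rw [norm_mul]
      calc ‖lam‖ * ‖φ x‖ ≤ 1 * 1 := by
            apply mul_le_mul hlam (hφb x) (norm_nonneg _) (by linarith [norm_nonneg lam])
        _ = 1 := by norm_num
    · intro j
      have : ∫ x in Q, lam * φ x * f x j ∂μ = lam * ∫ x in Q, φ x * f x j ∂μ := by
        rw [← integral_const_mul]
        congr 1; funext x; ring
      rw [Pi.smul_apply, smul_eq_mul, this, hφv j]; ring
  · -- convexity
    rintro v ⟨φ₁, h1m, h1b, h1v⟩ u ⟨φ₂, h2m, h2b, h2v⟩ a b ha hb hab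
    refine ⟨fun x => (a:ℂ) * φ₁ x + (b:ℂ) * φ₂ x,
      (h1m.const_mul _).add (h2m.const_mul _), ?_, ?_⟩
    · intro x
      calc ‖(a:ℂ) * φ₁ x + (b:ℂ) * φ₂ x‖ ≤ ‖(a:ℂ) * φ₁ x‖ + ‖(b:ℂ) * φ₂ x‖ := norm_add_le _ _
        _ = |a| * ‖φ₁ x‖ + |b| * ‖φ₂ x‖ := by
            rw [norm_mul, norm_mul, Complex.norm_real, Complex.norm_real, Real.norm_eq_abs,
              Real.norm_eq_abs]
        _ ≤ a * 1 + b * 1 := by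
            rw [_root_.abs_of_nonneg ha, _root_.abs_of_nonneg hb]
            gcongr
            exacts [h1b x, h2b x]
        _ = 1 := by linarith
    · intro j
      have hint1 : Integrable (fun x => (a:ℂ) * (φ₁ x * f x j)) (μ.restrict Q) :=
        (hi φ₁ h1m h1b j).const_mul _
      have hint2 : Integrable (fun x => (b:ℂ) * (φ₂ x * f x j)) (μ.restrict Q) :=
        (hi φ₂ h2m h2b j).const_mul _
      have e : ∫ x in Q, ((a:ℂ) * φ₁ x + (b:ℂ) * φ₂ x) * f x j ∂μ
          = (a:ℂ) * ∫ x in Q, φ₁ x * f x j ∂μ + (b:ℂ) * ∫ x in Q, φ₂ x * f x j ∂μ := by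
        rw [← integral_const_mul, ← integral_const_mul, ← integral_add hint1 hint2]
        congr 1; funext x; ring
      have : (a • v + b • u) j = (a:ℂ) * v j + (b:ℂ) * u j := by
        simp [Pi.smul_apply, Complex.real_smul]
      rw [this, e, h1v j, h2v j]; ring
  · -- compactness
    classical
    set m := μ.restrict Q with hm
    have hfm : ∀ j, AEStronglyMeasurable (fun x => f x j) m := fun j => (hf j).1
    set f' : Fin d → α → ℂ := fun j => (hfm j).mk _ with hf'
    have hf'sm : ∀ j, StronglyMeasurable (f' j) := fun j => (hfm j).stronglyMeasurable_mk
    have hf'ae : ∀ j, (fun x => f x j) =ᵐ[m] f' j := fun j => (hfm j).ae_eq_mk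
    set g : α → ℝ≥0 := fun x => ∑ j, ‖f' j x‖₊ with hg
    have hgmeas : Measurable g := by
      apply Finset.measurable_sum
      intro j _
      exact (hf'sm j).measurable.nnnorm
    set ν : Measure α := m.withDensity (fun x => (g x : ℝ≥0∞)) with hν
    have hνfin : IsFiniteMeasure ν := by
      constructor
      rw [hν, withDensity_apply _ MeasurableSet.univ, Measure.restrict_univ]
      have e1 : ∫⁻ x, (g x : ℝ≥0∞) ∂m = ∑ j, ∫⁻ x, (‖f' j x‖₊ : ℝ≥0∞) ∂m := by
        rw [← lintegral_finset_sum]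
        · congr 1; funext x; rw [hg]; push_cast; rfl
        · exact fun j _ => (hf'sm j).measurable.nnnorm.coe_nnreal_ennreal
      rw [e1]
      apply ENNReal.sum_lt_top.mpr
      intro j _
      have e2 : ∫⁻ x, (‖f' j x‖₊ : ℝ≥0∞) ∂m = ∫⁻ x, (‖f x j‖₊ : ℝ≥0∞) ∂m :=
        lintegral_congr_ae ((hf'ae j).mono fun x hx => by simp only []; rw [← hx])
      rw [e2]
      exact (hf j).2
    haveI := hνfin
    -- the normalized functions h j = f' j / g
    set h : Fin d → α → ℂ := fun j x => if g x = 0 then 0 else f' j x / ((g x : ℝ) : ℂ) with hh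
    have hgz : ∀ x, g x = 0 → ∀ j, f' j x = 0 := by
      intro x hx j
      have : ‖f' j x‖₊ = 0 := by
        have := Finset.sum_eq_zero_iff.mp (hg ▸ hx) j (Finset.mem_univ j)
        exact this
      simpa using this
    have hhmeas : ∀ j, Measurable (h j) := by
      intro j
      apply Measurable.ite (hgmeas (measurableSet_singleton 0))
      · exact measurable_const
      · exact (hf'sm j).measurable.div
          (Complex.measurable_ofReal.comp (hgmeas.coe_nnreal_real))
    have hfle : ∀ j x, ‖f' j x‖ ≤ (g x : ℝ) := by
      intro j x
      rw [hg]
      push_cast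
      exact Finset.single_le_sum (f := fun k => ‖f' k x‖) (fun k _ => norm_nonneg _)
        (Finset.mem_univ j)
    have hhb : ∀ j x, ‖h j x‖ ≤ 1 := by
      intro j x
      rw [hh]
      by_cases hx : g x = 0
      · simp [hx]
      · have hxpos : (0:ℝ) < (g x : ℝ) := by
          rw [NNReal.coe_pos]
          exact pos_iff_ne_zero.mpr hx
        simp only [hx, if_false]
        rw [norm_div, Complex.norm_real, Real.norm_eq_abs, abs_of_pos hxpos,
          div_le_one hxpos]
        exact hfle j x
    -- the smul identity
    have hgh : ∀ j x, (g x : ℝ) • h j x = f' j x := by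
      intro j x
      by_cases hx : g x = 0
      · simp [hh, hx, hgz x hx j]
      · have hxne : ((g x : ℝ) : ℂ) ≠ 0 := by
          simp only [ne_eq, Complex.ofReal_eq_zero, NNReal.coe_eq_zero]
          exact hx
        simp only [hh, hx, if_false]
        rw [Complex.real_smul]
        field_simp
    -- the key integral identity
    have I1 : ∀ (φ : α → ℂ), Measurable φ → (∀ x, ‖φ x‖ ≤ 1) →
        ∀ j, ∫ x in Q, φ x * f x j ∂μ = ∫ x, φ x * h j x ∂ν := by
      intro φ hφm hφb j
      have e1 : ∫ x in Q, φ x * f x j ∂μ = ∫ x, φ x * f' j x ∂m :=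
        integral_congr_ae ((hf'ae j).mono fun x hx => by simp only []; rw [← hx])
      rw [e1, hν, integral_withDensity_eq_integral_smul hgmeas]
      congr 1
      funext x
      rw [← mul_smul_comm, NNReal.smul_def, hgh j x]
    haveI := hνfin
    have hhmem : ∀ j, MemLp (h j) 2 ν := fun j =>
      MemLp.of_bound ((hhmeas j).aestronglyMeasurable) 1 (ae_of_all _ (hhb j))
    set hL : Fin d → Lp ℂ 2 ν := fun j => (hhmem j).toLp (h j) with hhL
    have I2 : ∀ (F : Lp ℂ 2 ν) (j : Fin d),
        (inner ℂ F (hL j) : ℂ) = ∫ x, (starRingEnd ℂ) (F x) * h j x ∂ν := by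
      intro F j
      rw [MeasureTheory.L2.inner_def]
      apply integral_congr_ae
      filter_upwards [(hhmem j).coeFn_toLp] with x hx
      rw [RCLike.inner_apply']
      congr 1
    have hFint : ∀ F : Lp ℂ 2 ν, Integrable (F : α → ℂ) ν := fun F =>
      memLp_one_iff_integrable.mp ((Lp.memLp F).mono_exponent one_le_two)
    have I3 : ∀ (F : Lp ℂ 2 ν) (A : Set α) (hA : MeasurableSet A),
        (inner ℂ (indicatorConstLp 2 hA (measure_ne_top ν A) (1:ℂ)) F : ℂ)
          = ∫ x in A, F x ∂ν := by
      intro F A hA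
      rw [MeasureTheory.L2.inner_indicatorConstLp_eq_setIntegral_inner ℂ F hA (1:ℂ)
        (measure_ne_top ν A)]
      simp [RCLike.inner_apply]
    set R : ℝ := (measureUnivNNReal ν : ℝ) ^ (2 : ℝ≥0∞).toReal⁻¹ * 1 with hR
    set K : Set (WeakDual ℂ (Lp ℂ 2 ν)) :=
      (WeakDual.toStrongDual ⁻¹' Metric.closedBall 0 R) ∩
        ⋂ (A : {s : Set α // MeasurableSet s}),
          {Λ | ‖Λ (indicatorConstLp 2 A.2 (measure_ne_top ν A.1) (1:ℂ))‖ ≤ (ν A.1).toReal}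
      with hK
    have hKcomp : IsCompact K :=
      (WeakDual.isCompact_closedBall (0 : StrongDual ℂ (Lp ℂ 2 ν)) R).inter_right
        (isClosed_iInter fun A => isClosed_le ((WeakDual.eval_continuous _).norm)
          continuous_const)
    set W : WeakDual ℂ (Lp ℂ 2 ν) → (Fin d → ℂ) := fun Λ j => c * Λ (hL j) with hW
    have hWcont : Continuous W :=
      continuous_pi fun j => continuous_const.mul (WeakDual.eval_continuous (hL j))
    have hsub1 : convexBodyAvg μ Q f ⊆ W '' K := by
      rintro v ⟨φ, hφm, hφb, hφv⟩
      have hconjb : ∀ x, ‖(starRingEnd ℂ) (φ x)‖ ≤ 1 := fun x => by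
        rw [RCLike.norm_conj]; exact hφb x
      have hconjmem : MemLp (fun x => (starRingEnd ℂ) (φ x)) 2 ν :=
        MemLp.of_bound ((continuous_star.measurable.comp hφm).aestronglyMeasurable) 1 (Filter.Eventually.of_forall hconjb)
      set F : Lp ℂ 2 ν := hconjmem.toLp _ with hF
      have hFae : (F : α → ℂ) =ᵐ[ν] fun x => (starRingEnd ℂ) (φ x) := hconjmem.coeFn_toLp
      set Λ : WeakDual ℂ (Lp ℂ 2 ν) :=
        StrongDual.toWeakDual (InnerProductSpace.toDual ℂ (Lp ℂ 2 ν) F) with hΛ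
      have hΛapp : ∀ u : Lp ℂ 2 ν, Λ u = (inner ℂ F u : ℂ) := fun u =>
        InnerProductSpace.toDual_apply_apply
      refine ⟨Λ, ⟨?_, ?_⟩, ?_⟩
      · -- ball membership
        simp only [Set.mem_preimage, Metric.mem_closedBall, dist_zero_right]
        have : ‖WeakDual.toStrongDual Λ‖ = ‖F‖ := by
          rw [hΛ]
          exact (InnerProductSpace.toDual ℂ (Lp ℂ 2 ν)).norm_map F
        rw [this, hR]
        apply Lp.norm_le_of_ae_bound zero_le_one
        filter_upwards [hFae] with x hx
        rw [hx]; exact hconjb x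
      · -- indicator conditions
        apply Set.mem_iInter.mpr
        intro A
        have e2 : Λ (indicatorConstLp 2 A.2 (measure_ne_top ν A.1) 1)
            = (starRingEnd ℂ) (∫ x in A.1, F x ∂ν) := by
          rw [hΛapp, ← inner_conj_symm, I3]
        simp only [Set.mem_setOf_eq]
        rw [e2, RCLike.norm_conj]
        have hb' : ∀ᵐ x ∂ν, x ∈ A.1 → ‖(F : α → ℂ) x‖ ≤ 1 := by
          filter_upwards [hFae] with x hx _
          rw [hx]; exact hconjb x
        calc ‖∫ x in A.1, F x ∂ν‖ ≤ 1 * (ν A.1).toReal :=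
              norm_setIntegral_le_of_norm_le_const_ae' (measure_lt_top ν A.1) hb'
          _ = (ν A.1).toReal := one_mul _
      · -- W Λ = v
        funext j
        have e4 : Λ (hL j) = ∫ x in Q, φ x * f x j ∂μ := by
          rw [hΛapp, I2, I1 φ hφm hφb j]
          apply integral_congr_ae
          filter_upwards [hFae] with x hx
          rw [hx]
          simp
        show c * Λ (hL j) = v j
        rw [e4, hφv j]
    have hsub2 : W '' K ⊆ convexBodyAvg μ Q f := by
      rintro w ⟨Λ, hΛK, rfl⟩
      obtain ⟨hball, hints⟩ := hΛK
      set F : Lp ℂ 2 ν :=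
        (InnerProductSpace.toDual ℂ (Lp ℂ 2 ν)).symm (WeakDual.toStrongDual Λ) with hF
      have hΛapp : ∀ u, Λ u = (inner ℂ F u : ℂ) := fun u =>
        (InnerProductSpace.toDual_symm_apply).symm
      have hGsm := (Lp.aestronglyMeasurable F)
      set G : α → ℂ := hGsm.mk _ with hG
      have hGmeas : Measurable G := hGsm.stronglyMeasurable_mk.measurable
      have hGae : (F : α → ℂ) =ᵐ[ν] G := hGsm.ae_eq_mk
      have hGint : Integrable G ν := (hFint F).congr hGae
      have hGb : ∀ᵐ x ∂ν, ‖G x‖ ≤ 1 := by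
        apply ae_norm_le_one_of_setIntegral ν hGint
        intro A hA
        have e1 : ∫ x in A, G x ∂ν = ∫ x in A, F x ∂ν :=
          (integral_congr_ae (ae_restrict_of_ae hGae)).symm
        have e2 : Λ (indicatorConstLp 2 hA (measure_ne_top ν A) 1)
            = (starRingEnd ℂ) (∫ x in A, F x ∂ν) := by
          rw [hΛapp, ← inner_conj_symm, I3]
        have h5 := Set.mem_iInter.mp hints ⟨A, hA⟩
        simp only [Set.mem_setOf_eq] at h5
        rw [e2, RCLike.norm_conj] at h5
        rw [e1]
        exact h5
      set φ : α → ℂ := fun x => if ‖G x‖ ≤ 1 then (starRingEnd ℂ) (G x) else 0 with hφ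
      have hφm : Measurable φ := Measurable.ite (measurableSet_le hGmeas.norm measurable_const)
        (continuous_star.measurable.comp hGmeas) measurable_const
      have hφb : ∀ x, ‖φ x‖ ≤ 1 := by
        intro x
        simp only [hφ]
        split_ifs with hx
        · rw [RCLike.norm_conj]; exact hx
        · simp
      refine ⟨φ, hφm, hφb, fun j => ?_⟩
      have e3 : Λ (hL j) = ∫ x, φ x * h j x ∂ν := by
        rw [hΛapp, I2]
        apply integral_congr_ae
        filter_upwards [hGae, hGb] with x hx1 hx2
        rw [hx1, hφ]
        simp only [hx2, if_true]
      show c * Λ (hL j) = c * ∫ x in Q, φ x * f x j ∂μ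
      rw [e3, I1 φ hφm hφb j]
    have hEq : convexBodyAvg μ Q f = W '' K := Set.Subset.antisymm hsub1 hsub2
    rw [hEq]
    exact hKcomp.image hWcont
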